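/- Let ρ : [0,1] → ℝ be a continuous H¹ function with ρ > 0 and ∫₀¹ ρ = 1. Then for every x ∈ [0,1], |log ρ(x)| ≤ (∫₀¹ ρ dy)^{1/2} · (∫₀¹ ρ_y²/ρ³ dy)^{1/2} = (∫₀¹ ρ_y²/ρ³ dy)^{1/2}. Consequently max{‖ρ‖_{L∞}, ‖ρ^{-1}‖_{L∞}} ≤ exp((∫₀¹ ρ_y²/ρ³ dy)^{1/2}). -/

import Mathlib

open MeasureTheory

/-- Cauchy–Schwarz for interval integrals of continuous functions. -/
lemma cs_aux (f g : ℝ → ℝ) (a b : ℝ) (hab : a ≤ b)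
    (hf : ContinuousOn f (Set.Icc a b)) (hg : ContinuousOn g (Set.Icc a b)) :
    |∫ y in a..b, f y * g y| ≤
      Real.sqrt (∫ y in a..b, (f y)^2) * Real.sqrt (∫ y in a..b, (g y)^2) := by
  have huIcc : Set.uIcc a b = Set.Icc a b := Set.uIcc_of_le hab
  have hfi : IntervalIntegrable (fun y => (f y)^2) volume a b :=
    ((hf.pow 2).mono huIcc.subset).intervalIntegrable
  have hgi : IntervalIntegrable (fun y => (g y)^2) volume a b :=
    ((hg.pow 2).mono huIcc.subset).intervalIntegrable
  have hfgi : IntervalIntegrable (fun y => f y * g y) volume a b :=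
    ((hf.mul hg).mono huIcc.subset).intervalIntegrable
  set A := ∫ y in a..b, (f y)^2 with hA
  set B := ∫ y in a..b, f y * g y with hB
  set C := ∫ y in a..b, (g y)^2 with hC
  have key : ∀ t : ℝ, 0 ≤ A * (t * t) + (2 * B) * t + C := by
    intro t
    have h1 : (∫ y in a..b, (t * f y + g y)^2) = A * (t * t) + (2 * B) * t + C := by
      have heq : ∀ y, (t * f y + g y)^2
          = (t*t) * (f y)^2 + (2*t) * (f y * g y) + (g y)^2 := by intro y; ring
      simp_rw [heq]
      rw [intervalIntegral.integral_add ((hfi.const_mul _).add (hfgi.const_mul _)) hgi,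
        intervalIntegral.integral_add (hfi.const_mul _) (hfgi.const_mul _),
        intervalIntegral.integral_const_mul, intervalIntegral.integral_const_mul]
      ring
    have h2 : 0 ≤ ∫ y in a..b, (t * f y + g y)^2 :=
      intervalIntegral.integral_nonneg hab (fun y _ => sq_nonneg _)
    linarith [h1 ▸ h2]
  have hd := discrim_le_zero key
  rw [discrim] at hd
  have hAnn : 0 ≤ A := intervalIntegral.integral_nonneg hab (fun y _ => sq_nonneg _)
  have hB2 : B^2 ≤ A * C := by nlinarith
  calc |B| = Real.sqrt (B^2) := (Real.sqrt_sq_eq_abs B).symm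
    _ ≤ Real.sqrt (A * C) := Real.sqrt_le_sqrt hB2
    _ = Real.sqrt A * Real.sqrt C := Real.sqrt_mul hAnn C

/-- For a continuous H¹ density ρ > 0 on [0,1] with unit mass:
    |log ρ(x)| ≤ (∫₀¹ ρ)^{1/2} (∫₀¹ ρ_y²/ρ³)^{1/2}, and consequently
    max{ρ(x), ρ(x)⁻¹} ≤ exp((∫₀¹ ρ_y²/ρ³)^{1/2}) for all x ∈ [0,1]. -/
theorem stmt_4 (ρ ρ' : ℝ → ℝ)
    (hderiv : ∀ x, HasDerivAt ρ (ρ' x) x)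
    (hcont : ContinuousOn ρ' (Set.Icc 0 1))
    (hpos : ∀ x ∈ Set.Icc (0:ℝ) 1, 0 < ρ x)
    (hmass : (∫ x in (0:ℝ)..1, ρ x) = 1) :
    (∀ x ∈ Set.Icc (0:ℝ) 1,
      |Real.log (ρ x)| ≤
        Real.sqrt (∫ y in (0:ℝ)..1, ρ y) *
          Real.sqrt (∫ y in (0:ℝ)..1, (ρ' y)^2 / (ρ y)^3)) ∧
    (∀ x ∈ Set.Icc (0:ℝ) 1,
      max (ρ x) (ρ x)⁻¹ ≤
        Real.exp (Real.sqrt (∫ y in (0:ℝ)..1, (ρ' y)^2 / (ρ y)^3))) := by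
  have hρcont : Continuous ρ := by
    rw [continuous_iff_continuousAt]; exact fun x => (hderiv x).continuousAt
  -- existence of x₀ with ρ x₀ = 1
  obtain ⟨x₀, hx₀mem, hx₀⟩ : ∃ x₀ ∈ Set.Icc (0:ℝ) 1, ρ x₀ = 1 := by
    set F : ℝ → ℝ := fun t => ∫ s in (0:ℝ)..t, ρ s with hFdef
    have hF : ∀ x, HasDerivAt F (ρ x) x := fun x =>
      (intervalIntegral.integral_hasStrictDerivAt_right
        (hρcont.intervalIntegrable 0 x)
        (hρcont.stronglyMeasurable.stronglyMeasurableAtFilter)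
        hρcont.continuousAt).hasDerivAt
    have hFc : ContinuousOn F (Set.Icc 0 1) :=
      fun x _ => ((hF x).continuousAt).continuousWithinAt
    obtain ⟨c, hc, hc2⟩ := exists_hasDerivAt_eq_slope F ρ (by norm_num : (0:ℝ) < 1)
      hFc (fun x _ => hF x)
    refine ⟨c, ⟨hc.1.le, hc.2.le⟩, ?_⟩
    have hF0 : F 0 = 0 := intervalIntegral.integral_same
    have hF1 : F 1 = 1 := hmass
    rw [hc2, hF0, hF1]; norm_num
  have hlog0 : Real.log (ρ x₀) = 0 := by rw [hx₀, Real.log_one]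
  have S0 : 0 ≤ ∫ y in (0:ℝ)..1, (ρ' y)^2 / (ρ y)^3 :=
    intervalIntegral.integral_nonneg zero_le_one
      (fun y hy => div_nonneg (sq_nonneg _) (pow_pos (hpos y hy) 3).le)
  have key : ∀ x ∈ Set.Icc (0:ℝ) 1,
      |Real.log (ρ x)| ≤
        Real.sqrt (∫ y in (0:ℝ)..1, ρ y) *
          Real.sqrt (∫ y in (0:ℝ)..1, (ρ' y)^2 / (ρ y)^3) := by
    intro x hx
    set a := min x x₀ with ha
    set b := max x x₀ with hb
    have hab : a ≤ b := min_le_max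
    have hsub : Set.Icc a b ⊆ Set.Icc (0:ℝ) 1 :=
      Set.Icc_subset_Icc (le_min hx.1 hx₀mem.1) (max_le hx.2 hx₀mem.2)
    have huab : Set.uIcc a b = Set.Icc a b := Set.uIcc_of_le hab
    have huxx : Set.uIcc x₀ x = Set.Icc a b := by
      rw [Set.uIcc, ha, hb, min_comm, max_comm]
    have hposab : ∀ t ∈ Set.Icc a b, 0 < ρ t := fun t ht => hpos t (hsub ht)
    -- FTC
    have hFTC : (∫ t in x₀..x, ρ' t / ρ t) = Real.log (ρ x) - Real.log (ρ x₀) := by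
      apply intervalIntegral.integral_eq_sub_of_hasDerivAt
      · intro t ht
        rw [huxx] at ht
        exact (hderiv t).log (hposab t ht).ne'
      · apply ContinuousOn.intervalIntegrable
        rw [huxx]
        exact (hcont.mono hsub).div (hρcont.continuousOn)
          (fun t ht => (hposab t ht).ne')
    have habs : |Real.log (ρ x)| = |∫ t in a..b, ρ' t / ρ t| := by
      have : |Real.log (ρ x)| = |∫ t in x₀..x, ρ' t / ρ t| := by
        rw [hFTC, hlog0, sub_zero]
      rw [this]
      rcases le_total x₀ x with h | h
      · rw [ha, hb, min_eq_right h, max_eq_left h]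
      · rw [ha, hb, min_eq_left h, max_eq_right h,
          intervalIntegral.integral_symm, abs_neg]
    -- Cauchy–Schwarz with f = √ρ, g = ρ'/(ρ√ρ)
    set f : ℝ → ℝ := fun t => Real.sqrt (ρ t) with hf
    set g : ℝ → ℝ := fun t => ρ' t / (ρ t * Real.sqrt (ρ t)) with hg
    have hfc : ContinuousOn f (Set.Icc a b) := (hρcont.continuousOn).sqrt
    have hgc : ContinuousOn g (Set.Icc a b) := by
      apply (hcont.mono hsub).div ((hρcont.continuousOn).mul (hρcont.continuousOn).sqrt)
      intro t ht
      have h1 := hposab t ht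
      exact mul_ne_zero h1.ne' (Real.sqrt_pos.mpr h1).ne'
    have hfg : (∫ t in a..b, ρ' t / ρ t) = ∫ t in a..b, f t * g t := by
      apply intervalIntegral.integral_congr
      intro t ht
      rw [huab] at ht
      have h1 := hposab t ht
      have h2 : Real.sqrt (ρ t) ≠ 0 := (Real.sqrt_pos.mpr h1).ne'
      field_simp [hf, hg]
      show ρ' t = ρ t * √(ρ t) * (ρ' t / (ρ t * √(ρ t)))
      field_simp
    have hf2 : (∫ t in a..b, (f t)^2) = ∫ t in a..b, ρ t := by
      apply intervalIntegral.integral_congr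
      intro t ht
      rw [huab] at ht
      exact Real.sq_sqrt (hposab t ht).le
    have hg2 : (∫ t in a..b, (g t)^2) = ∫ t in a..b, (ρ' t)^2 / (ρ t)^3 := by
      apply intervalIntegral.integral_congr
      intro t ht
      rw [huab] at ht
      have h1 := hposab t ht
      have h2 : (ρ t * Real.sqrt (ρ t))^2 = (ρ t)^3 := by
        rw [mul_pow, Real.sq_sqrt h1.le]; ring
      simp only [hg, div_pow, h2]
    -- monotonicity of the integrals
    have hmono1 : (∫ t in a..b, ρ t) ≤ ∫ y in (0:ℝ)..1, ρ y := by
      apply intervalIntegral.integral_mono_interval (le_min hx.1 hx₀mem.1) hab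
        (max_le hx.2 hx₀mem.2)
      · filter_upwards [ae_restrict_mem measurableSet_Ioc] with y hy
        exact (hpos y ⟨hy.1.le, hy.2⟩).le
      · exact hρcont.intervalIntegrable 0 1
    have hii : IntervalIntegrable (fun y => (ρ' y)^2 / (ρ y)^3) volume 0 1 := by
      apply ContinuousOn.intervalIntegrable
      rw [Set.uIcc_of_le (zero_le_one : (0:ℝ) ≤ 1)]
      exact (hcont.pow 2).div ((hρcont.continuousOn).pow 3)
        (fun t ht => (pow_pos (hpos t ht) 3).ne')
    have hmono2 : (∫ t in a..b, (ρ' t)^2 / (ρ t)^3) ≤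
        ∫ y in (0:ℝ)..1, (ρ' y)^2 / (ρ y)^3 := by
      apply intervalIntegral.integral_mono_interval (le_min hx.1 hx₀mem.1) hab
        (max_le hx.2 hx₀mem.2)
      · filter_upwards [ae_restrict_mem measurableSet_Ioc] with y hy
        exact div_nonneg (sq_nonneg _) (pow_pos (hpos y ⟨hy.1.le, hy.2⟩) 3).le
      · exact hii
    calc |Real.log (ρ x)| = |∫ t in a..b, f t * g t| := by rw [habs, hfg]
      _ ≤ Real.sqrt (∫ t in a..b, (f t)^2) * Real.sqrt (∫ t in a..b, (g t)^2) :=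
          cs_aux f g a b hab hfc hgc
      _ ≤ Real.sqrt (∫ y in (0:ℝ)..1, ρ y) *
            Real.sqrt (∫ y in (0:ℝ)..1, (ρ' y)^2 / (ρ y)^3) := by
          apply mul_le_mul
          · exact Real.sqrt_le_sqrt (hf2 ▸ hmono1)
          · exact Real.sqrt_le_sqrt (hg2 ▸ hmono2)
          · exact Real.sqrt_nonneg _
          · exact Real.sqrt_nonneg _
  refine ⟨key, ?_⟩
  intro x hx
  have h := key x hx
  rw [hmass, Real.sqrt_one, one_mul] at h
  have h1 : Real.log (ρ x) ≤ Real.sqrt (∫ y in (0:ℝ)..1, (ρ' y)^2 / (ρ y)^3) :=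
    (abs_le.mp h).2
  have h2 : -Real.sqrt (∫ y in (0:ℝ)..1, (ρ' y)^2 / (ρ y)^3) ≤ Real.log (ρ x) :=
    (abs_le.mp h).1
  have hρx := hpos x hx
  apply max_le
  · calc ρ x = Real.exp (Real.log (ρ x)) := (Real.exp_log hρx).symm
      _ ≤ _ := Real.exp_le_exp.mpr h1
  · calc (ρ x)⁻¹ = Real.exp (-Real.log (ρ x)) := by
          rw [Real.exp_neg, Real.exp_log hρx]
      _ ≤ _ := Real.exp_le_exp.mpr (by linarith)
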